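/- Let p > 0 and let K be the Bergman kernel of E = {(z,w) ∈ ℂ² : |z|² + |w|^{2p} < 1}, given by K(z,w) = [(p-1)/(pπ²)]·(1-|z|²)^{-2+1/p}·ψ^{-2} + [2/(pπ²)]·(1-|z|²)^{-2+2/p}·ψ^{-3} with ψ = (1-|z|²)^{1/p} - |w|². Then K(z,w) > 0 for all (z,w) ∈ E. -/

import Mathlib

/-- The explicit Bergman kernel of `E(1,1,p)` is positive on `E`: for `p > 0` and
`(z,w)` with `|z|² + |w|^{2p} < 1`, writing `φ = 1 - |z|²`, `ψ = φ^{1/p} - |w|²`,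
`K = (p-1)/(pπ²) · φ^{-2+1/p} ψ^{-2} + 2/(pπ²) · φ^{-2+2/p} ψ^{-3} > 0`. -/
theorem stmt_13 (p : ℝ) (hp : 0 < p) (z w : ℂ)
    (hzw : ‖z‖ ^ 2 + ‖w‖ ^ (2 * p) < 1) :
    0 < (p - 1) / (p * Real.pi ^ 2) * (1 - ‖z‖ ^ 2) ^ (-2 + 1 / p) *
          ((1 - ‖z‖ ^ 2) ^ (1 / p) - ‖w‖ ^ 2) ^ (-2 : ℝ)
        + 2 / (p * Real.pi ^ 2) * (1 - ‖z‖ ^ 2) ^ (-2 + 2 / p) *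
          ((1 - ‖z‖ ^ 2) ^ (1 / p) - ‖w‖ ^ 2) ^ (-3 : ℝ) := by
  have hwnn : (0:ℝ) ≤ ‖w‖ := norm_nonneg w
  have hw2p : ‖w‖ ^ (2 * p) = (‖w‖ ^ 2 : ℝ) ^ p := by
    rw [← Real.rpow_natCast (‖w‖) 2, ← Real.rpow_mul hwnn]
    norm_num
  have hφ : 0 < 1 - ‖z‖ ^ 2 := by
    have h0 : (0:ℝ) ≤ ‖w‖ ^ (2 * p) := Real.rpow_nonneg hwnn _
    linarith
  have h1 : (‖w‖ ^ 2 : ℝ) ^ p < 1 - ‖z‖ ^ 2 := by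
    rw [← hw2p]; linarith
  have hB : ‖w‖ ^ 2 < (1 - ‖z‖ ^ 2) ^ (1 / p) := by
    have h2 := Real.rpow_lt_rpow (Real.rpow_nonneg (by positivity) p) h1
      (by positivity : (0:ℝ) < 1 / p)
    rwa [← Real.rpow_mul (by positivity), mul_one_div, div_self hp.ne',
      Real.rpow_one] at h2
  set ψ : ℝ := (1 - ‖z‖ ^ 2) ^ (1 / p) - ‖w‖ ^ 2 with hψdef
  have hψ : 0 < ψ := sub_pos.mpr hB
  have e1 : (1 - ‖z‖ ^ 2) ^ (-2 + 2 / p)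
      = (1 - ‖z‖ ^ 2) ^ (-2 + 1 / p) * (1 - ‖z‖ ^ 2) ^ (1 / p) := by
    rw [← Real.rpow_add hφ]; ring_nf
  have e2 : ψ ^ (-2 : ℝ) = ψ ^ (-3 : ℝ) * ψ := by
    rw [show (-2:ℝ) = -3 + 1 by norm_num, Real.rpow_add hψ, Real.rpow_one]
  rw [e1, e2]
  have hX : 0 < (1 - ‖z‖ ^ 2) ^ (-2 + 1 / p) := Real.rpow_pos_of_pos hφ _
  have hY : 0 < ψ ^ (-3 : ℝ) := Real.rpow_pos_of_pos hψ _
  have hpi : 0 < p * Real.pi ^ 2 := by positivity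
  have key : 0 < (p - 1) * ψ + 2 * (1 - ‖z‖ ^ 2) ^ (1 / p) := by
    have hw2 : (0:ℝ) ≤ ‖w‖ ^ 2 := by positivity
    have hge : ψ ≤ (1 - ‖z‖ ^ 2) ^ (1 / p) := by
      rw [hψdef]; linarith
    nlinarith [hψ, hp]
  calc (0:ℝ) < (1 - ‖z‖ ^ 2) ^ (-2 + 1 / p) * ψ ^ (-3 : ℝ) / (p * Real.pi ^ 2)
        * ((p - 1) * ψ + 2 * (1 - ‖z‖ ^ 2) ^ (1 / p)) :=
        mul_pos (div_pos (mul_pos hX hY) hpi) key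
    _ = (p - 1) / (p * Real.pi ^ 2) * (1 - ‖z‖ ^ 2) ^ (-2 + 1 / p) * (ψ ^ (-3:ℝ) * ψ)
        + 2 / (p * Real.pi ^ 2) * ((1 - ‖z‖ ^ 2) ^ (-2 + 1 / p)
          * (1 - ‖z‖ ^ 2) ^ (1 / p)) * ψ ^ (-3:ℝ) := by ring
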